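/- For positive reals a, d and the function SEE(t) = log₂(1 + a t/d) / (μ t + P) with μ, P > 0 defined for t ≥ 0, there exists t* ≥ 0 such that SEE is nondecreasing on [0, t*] and nonincreasing on [t*, ∞); i.e., SEE is unimodal. Consequently, for any T ≥ t*, the maximizer of SEE over [0, T] equals t*, independent of T. -/

import Mathlib

open Real

private lemma see_aux (c μ P : ℝ) (hc : 0 < c) (hμ : 0 < μ) (hP : 0 < P) :
    ∃ tstar : ℝ, 0 ≤ tstar ∧
      MonotoneOn (fun t => Real.log (1 + c * t) / (μ * t + P)) (Set.Icc 0 tstar) ∧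
      AntitoneOn (fun t => Real.log (1 + c * t) / (μ * t + P)) (Set.Ici tstar) := by
  set F : ℝ → ℝ := fun t => Real.log (1 + c * t) / (μ * t + P) with hF
  set g : ℝ → ℝ := fun t => c * (μ * t + P) - μ * ((1 + c * t) * Real.log (1 + c * t)) with hg
  have hpos : ∀ t : ℝ, 0 ≤ t → (0:ℝ) < 1 + c * t := by
    intro t ht; nlinarith
  have hden : ∀ t : ℝ, 0 ≤ t → (0:ℝ) < μ * t + P := by
    intro t ht; nlinarith
  have hA : ∀ t : ℝ, HasDerivAt (fun t => 1 + c * t) c t := by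
    intro t
    simpa using ((hasDerivAt_id t).const_mul c).const_add 1
  have hB : ∀ t : ℝ, HasDerivAt (fun t => μ * t + P) μ t := by
    intro t
    simpa using ((hasDerivAt_id t).const_mul μ).add_const P
  have hL : ∀ t : ℝ, 0 ≤ t → HasDerivAt (fun t => Real.log (1 + c * t)) (c / (1 + c * t)) t := by
    intro t ht
    exact (hA t).log (ne_of_gt (hpos t ht))
  have hgd : ∀ t : ℝ, 0 ≤ t → HasDerivAt g (-(μ * c * Real.log (1 + c * t))) t := by
    intro t ht
    have hM := (hA t).mul (hL t ht)
    have := ((hB t).const_mul c).sub (hM.const_mul μ)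
    refine this.congr_deriv ?_
    have h1 : (1 + c * t) ≠ 0 := ne_of_gt (hpos t ht)
    field_simp
    ring
  have hFd : ∀ t : ℝ, 0 ≤ t →
      HasDerivAt F (g t / ((1 + c * t) * (μ * t + P) ^ 2)) t := by
    intro t ht
    have := (hL t ht).div (hB t) (ne_of_gt (hden t ht))
    refine this.congr_deriv ?_
    have h1 : (1 + c * t) ≠ 0 := ne_of_gt (hpos t ht)
    have h2 : (μ * t + P) ≠ 0 := ne_of_gt (hden t ht)
    field_simp
    ring
  -- g is antitone on [0, ∞)
  have hganti : AntitoneOn g (Set.Ici 0) := by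
    apply antitoneOn_of_deriv_nonpos (convex_Ici 0)
    · exact fun t ht => ((hgd t ht).continuousAt).continuousWithinAt
    · intro t ht
      rw [interior_Ici] at ht
      exact ((hgd t (le_of_lt (Set.mem_Ioi.mp ht))).differentiableAt).differentiableWithinAt
    · intro t ht
      rw [interior_Ici] at ht
      have ht' : 0 < t := Set.mem_Ioi.mp ht
      rw [(hgd t (le_of_lt ht')).deriv]
      have : 0 ≤ Real.log (1 + c * t) := by
        apply Real.log_nonneg; nlinarith
      nlinarith [mul_nonneg (mul_nonneg hμ.le hc.le) this]
  -- the set where g ≤ 0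
  set S : Set ℝ := {t | 0 ≤ t ∧ g t ≤ 0} with hS
  have hSne : S.Nonempty := by
    set t0 : ℝ := max (P / μ) ((Real.exp 2 - 1) / c) with ht0
    have ht0P : P / μ ≤ t0 := le_max_left _ _
    have ht0e : (Real.exp 2 - 1) / c ≤ t0 := le_max_right _ _
    have ht0nn : 0 ≤ t0 := le_trans (by positivity) ht0P
    have hPt0 : P ≤ μ * t0 := by
      rw [div_le_iff₀ hμ] at ht0P; linarith
    have hexp : Real.exp 2 ≤ 1 + c * t0 := by
      rw [div_le_iff₀ hc] at ht0e; linarith [mul_comm c t0]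
    have hlog : (2:ℝ) ≤ Real.log (1 + c * t0) := by
      rw [Real.le_log_iff_exp_le (hpos t0 ht0nn)]; exact hexp
    refine ⟨t0, ht0nn, ?_⟩
    have h1 : 0 ≤ μ * (1 + c * t0) := by positivity
    have h2 : μ * (1 + c * t0) * 2 ≤ μ * (1 + c * t0) * Real.log (1 + c * t0) := by
      exact mul_le_mul_of_nonneg_left hlog h1
    have h3 : 0 ≤ c * (μ * t0 - P) := mul_nonneg hc.le (by linarith)
    simp only [hg]
    nlinarith
  have hSbdd : BddBelow S := ⟨0, fun x hx => hx.1⟩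
  set tstar : ℝ := sInf S with htstar
  have htnn : 0 ≤ tstar := le_csInf hSne fun x hx => hx.1
  have hgpos : ∀ t : ℝ, 0 ≤ t → t < tstar → 0 < g t := by
    intro t ht htlt
    by_contra h
    push_neg at h
    exact absurd (csInf_le hSbdd ⟨ht, h⟩) (not_le.mpr htlt)
  have hgneg : ∀ t : ℝ, tstar < t → g t ≤ 0 := by
    intro t htlt
    obtain ⟨s, hsS, hst⟩ := exists_lt_of_csInf_lt hSne htlt
    have := hganti (Set.mem_Ici.mpr hsS.1) (Set.mem_Ici.mpr (le_trans hsS.1 hst.le)) hst.le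
    linarith [hsS.2]
  refine ⟨tstar, htnn, ?_, ?_⟩
  · apply monotoneOn_of_deriv_nonneg (convex_Icc 0 tstar)
    · exact fun t ht => ((hFd t ht.1).continuousAt).continuousWithinAt
    · intro t ht
      rw [interior_Icc] at ht
      exact ((hFd t ht.1.le).differentiableAt).differentiableWithinAt
    · intro t ht
      rw [interior_Icc] at ht
      rw [(hFd t ht.1.le).deriv]
      apply div_nonneg (hgpos t ht.1.le ht.2).le
      have := hpos t ht.1.le
      have := hden t ht.1.le
      positivity
  · apply antitoneOn_of_deriv_nonpos (convex_Ici tstar)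
    · exact fun t ht => ((hFd t (le_trans htnn ht)).continuousAt).continuousWithinAt
    · intro t ht
      rw [interior_Ici] at ht
      exact ((hFd t (le_trans htnn ht.le)).differentiableAt).differentiableWithinAt
    · intro t ht
      rw [interior_Ici] at ht
      have htnn' : 0 ≤ t := le_trans htnn ht.le
      rw [(hFd t htnn').deriv]
      apply div_nonpos_of_nonpos_of_nonneg (hgneg t ht)
      have := hpos t htnn'
      have := hden t htnn'
      positivity

theorem see_unimodal (a d μ P : ℝ) (ha : 0 < a) (hd : 0 < d) (hμ : 0 < μ) (hP : 0 < P) :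
    ∃ tstar : ℝ, 0 ≤ tstar ∧
      MonotoneOn (fun t => logb 2 (1 + a * t / d) / (μ * t + P)) (Set.Icc 0 tstar) ∧
      AntitoneOn (fun t => logb 2 (1 + a * t / d) / (μ * t + P)) (Set.Ici tstar) ∧
      ∀ T, tstar ≤ T →
        IsMaxOn (fun t => logb 2 (1 + a * t / d) / (μ * t + P)) (Set.Icc 0 T) tstar := by
  obtain ⟨tstar, htnn, hmono, hanti⟩ := see_aux (a / d) μ P (div_pos ha hd) hμ hP
  have hkey : ∀ t : ℝ, logb 2 (1 + a * t / d) / (μ * t + P)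
      = (Real.log (1 + a / d * t) / (μ * t + P)) / Real.log 2 := by
    intro t
    have h : a * t / d = a / d * t := by ring
    rw [h, Real.logb, div_right_comm]
  have hlog2 : (0:ℝ) < Real.log 2 := Real.log_pos one_lt_two
  have hmono' : MonotoneOn (fun t => logb 2 (1 + a * t / d) / (μ * t + P)) (Set.Icc 0 tstar) := by
    intro x hx y hy hxy
    simp only [hkey]
    exact div_le_div_of_nonneg_right (hmono hx hy hxy) hlog2.le
  have hanti' : AntitoneOn (fun t => logb 2 (1 + a * t / d) / (μ * t + P)) (Set.Ici tstar) := by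
    intro x hx y hy hxy
    simp only [hkey]
    exact div_le_div_of_nonneg_right (hanti hx hy hxy) hlog2.le
  refine ⟨tstar, htnn, hmono', hanti', ?_⟩
  intro T hT
  intro x hx
  simp only [Set.mem_setOf_eq]
  rcases le_or_gt x tstar with h | h
  · exact hmono' ⟨hx.1, h⟩ ⟨htnn, le_refl tstar⟩ h
  · exact hanti' (Set.self_mem_Ici) (Set.mem_Ici.mpr h.le) h.le
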